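/- For every positive integer t, there exists an integer n such that the prime difference graph G_n contains t pairwise edge-disjoint Hamilton cycles. -/

import Mathlib

/-- `a 0, ..., a (n-1)` is a Hamilton cycle of `{1,...,n}` with all consecutive
absolute differences (including the wrap-around one) prime. -/
def IsPrimeDiffHamCycle (n : ℕ) (a : ℕ → ℤ) : Prop :=
  Set.BijOn a (Set.Ico 0 n) (Set.Icc 1 (n : ℤ)) ∧
  (∀ i, i + 1 < n → ((a i - a (i + 1)).natAbs).Prime) ∧
  ((a (n - 1) - a 0).natAbs).Prime

/-- The set of (unordered) edges of the cycle `a 0, ..., a (n-1), a 0`. -/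
def cycleEdges (n : ℕ) (a : ℕ → ℤ) : Set (Sym2 ℤ) :=
  {e | ∃ i < n, e = s(a i, a ((i + 1) % n))}

lemma chebyshev_lower (n k : ℕ) (hn : 1 ≤ n) (h : (2 * n + 1) ^ k < 4 ^ n) :
    k ≤ (Nat.primesBelow (2 * n + 1)).card := by
  by_contra hc
  push_neg at hc
  set c := (Nat.primesBelow (2 * n + 1)).card with hcdef
  have hCB : 0 < Nat.centralBinom n := Nat.centralBinom_pos n
  have hsupp : (Nat.centralBinom n).factorization.support ⊆ Nat.primesBelow (2 * n + 1) := by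
    intro p hp
    have hpprime : p.Prime := Nat.prime_of_mem_primeFactors (by simpa using hp)
    have hν : 1 ≤ (Nat.centralBinom n).factorization p := by
      have := Finsupp.mem_support_iff.mp hp
      omega
    have hple : p ≤ 2 * n := by
      calc p = p ^ 1 := (pow_one p).symm
        _ ≤ p ^ ((Nat.centralBinom n).factorization p) :=
            Nat.pow_le_pow_right hpprime.pos hν
        _ ≤ 2 * n := Nat.pow_factorization_choose_le (by omega)
    exact Nat.mem_primesBelow.mpr ⟨by omega, hpprime⟩
  have hmain : Nat.centralBinom n ≤ (2 * n + 1) ^ c := by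
    calc Nat.centralBinom n
        = (Nat.centralBinom n).factorization.prod (· ^ ·) :=
          (Nat.factorization_prod_pow_eq_self hCB.ne').symm
      _ ≤ ∏ p ∈ (Nat.centralBinom n).factorization.support, (2 * n + 1) := by
          rw [Finsupp.prod]
          apply Finset.prod_le_prod (fun _ _ => Nat.zero_le _)
          intro p hp
          exact le_trans (Nat.pow_factorization_choose_le (by omega)) (by omega)
      _ = (2 * n + 1) ^ (Nat.centralBinom n).factorization.support.card := by
          rw [Finset.prod_const]
      _ ≤ (2 * n + 1) ^ c :=
          Nat.pow_le_pow_right (by omega) (Finset.card_le_card hsupp)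
  have h4 : 4 ^ n ≤ (2 * n + 1) ^ (c + 1) := by
    calc 4 ^ n ≤ (2 * n + 1) * Nat.centralBinom n :=
          Nat.four_pow_le_two_mul_add_one_mul_central_binom n
      _ ≤ (2 * n + 1) * (2 * n + 1) ^ c := by
          exact Nat.mul_le_mul_left _ hmain
      _ = (2 * n + 1) ^ (c + 1) := by ring
  have : (2 * n + 1) ^ (c + 1) ≤ (2 * n + 1) ^ k :=
    Nat.pow_le_pow_right (by omega) (by omega)
  omega

/-- The cycle built from a pair of primes `p < q` with `n = p + q`. -/
noncomputable def pqCycle (p n : ℕ) : ℕ → ℤ := fun j => ((j * p) % n + 1 : ℕ)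

lemma pqCycle_diff (p q : ℕ) (hp : p.Prime) (hq : q.Prime) (hpq : p < q) (j : ℕ) :
    (pqCycle p (p + q) j - pqCycle p (p + q) (j + 1)).natAbs = p ∨
    (pqCycle p (p + q) j - pqCycle p (p + q) (j + 1)).natAbs = q := by
  set n := p + q with hn
  have hp2 := hp.two_le
  have hq2 := hq.two_le
  have hr : j * p % n < n := Nat.mod_lt _ (by omega)
  have hstep : (j + 1) * p % n = (j * p % n + p) % n := by
    conv_lhs => rw [add_mul, one_mul, Nat.add_mod, Nat.mod_eq_of_lt (show p < n by omega)]
  unfold pqCycle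
  rw [hstep]
  rcases lt_or_ge (j * p % n + p) n with hlt | hge
  · left
    rw [Nat.mod_eq_of_lt hlt]
    push_cast
    omega
  · right
    have : (j * p % n + p) % n = j * p % n + p - n := by
      rw [Nat.mod_eq_sub_mod hge, Nat.mod_eq_of_lt (by omega)]
    rw [this]
    have h1 : n ≤ j * p % n + p := hge
    push_cast [Nat.cast_sub hge]
    push_cast [hn]
    ring_nf
    omega

lemma pqCycle_isHam (p q : ℕ) (hp : p.Prime) (hq : q.Prime) (hpq : p < q) :
    IsPrimeDiffHamCycle (p + q) (pqCycle p (p + q)) := by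
  set n := p + q with hn
  have hp2 := hp.two_le
  have hq2 := hq.two_le
  have hn0 : 0 < n := by omega
  have hcop : Nat.Coprime p n := by
    have : Nat.Coprime p q := (Nat.coprime_primes hp hq).mpr (by omega)
    simpa [hn, Nat.Coprime, Nat.coprime_add_self_left] using this
  have hinj : Set.InjOn (pqCycle p n) (Set.Ico 0 n) := by
    intro j₁ h₁ j₂ h₂ he
    simp only [Set.mem_Ico] at h₁ h₂
    unfold pqCycle at he
    have he'' : j₁ * p % n + 1 = j₂ * p % n + 1 := by exact_mod_cast he
    have hmod : j₁ ≡ j₂ [MOD n] := by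
      have hx : j₁ * p ≡ j₂ * p [MOD n] := by
        unfold Nat.ModEq; omega
      exact hx.cancel_right_of_coprime (by simpa [Nat.Coprime, Nat.gcd_comm] using hcop)
    have h' := hmod
    unfold Nat.ModEq at h'
    rw [Nat.mod_eq_of_lt h₁.2, Nat.mod_eq_of_lt h₂.2] at h'
    exact h'
  have hmaps : Set.MapsTo (pqCycle p n) (Set.Ico 0 n) (Set.Icc 1 (n : ℤ)) := by
    intro j _
    unfold pqCycle
    have : j * p % n < n := Nat.mod_lt _ hn0
    simp only [Set.mem_Icc]
    constructor
    · exact_mod_cast Nat.le_add_left 1 _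
    · exact_mod_cast by omega
  have himeq : pqCycle p n '' (Set.Ico 0 n) = Set.Icc 1 (n : ℤ) := by
    apply Set.eq_of_subset_of_ncard_le (Set.mapsTo_iff_image_subset.mp hmaps)
    have h1 : (Set.Icc (1:ℤ) (n:ℤ)).ncard = n := by
      rw [← Finset.coe_Icc, Set.ncard_coe_finset, Int.card_Icc]
      simp
    have h2 : (pqCycle p n '' (Set.Ico 0 n)).ncard = n := by
      rw [Set.ncard_image_of_injOn hinj, ← Finset.coe_Ico, Set.ncard_coe_finset,
        Nat.card_Ico]
      omega
    omega
  refine ⟨⟨hmaps, hinj, himeq.symm.subset⟩, ?_, ?_⟩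
  · intro i hi
    rcases pqCycle_diff p q hp hq hpq i with h | h <;> rw [← hn] at h <;> rw [h]
    · exact hp
    · exact hq
  · have h0 : pqCycle p n 0 = 1 := by unfold pqCycle; simp
    have hlast : pqCycle p n (n - 1) = (q : ℤ) + 1 := by
      unfold pqCycle
      have he : (n - 1) * p = q + (p - 1) * n := by
        rw [hn]
        cases p with
        | zero => omega
        | succ p' => cases q with
          | zero => omega
          | succ q' =>
            have e1 : p' + 1 + (q' + 1) - 1 = p' + q' + 1 := by omega
            have e2 : p' + 1 - 1 = p' := by omega
            rw [e1, e2]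
            ring
      rw [he, Nat.add_mul_mod_self_right, Nat.mod_eq_of_lt (by omega)]
      push_cast
      ring
    rw [h0, hlast]
    simpa using hq

lemma pqCycle_mod (p n : ℕ) (hn : 0 < n) (j : ℕ) :
    pqCycle p n (j % n) = pqCycle p n j := by
  unfold pqCycle
  rw [Nat.mod_mul_mod]

lemma pqCycle_edge_diff (p q : ℕ) (hp : p.Prime) (hq : q.Prime) (hpq : p < q)
    (e : Sym2 ℤ) (he : e ∈ cycleEdges (p + q) (pqCycle p (p + q))) :
    ∃ x y : ℤ, e = s(x, y) ∧ ((x - y).natAbs = p ∨ (x - y).natAbs = q) := by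
  obtain ⟨i, hi, rfl⟩ := he
  have hn0 : 0 < p + q := by have := hp.two_le; omega
  refine ⟨pqCycle p (p + q) i, pqCycle p (p + q) ((i + 1) % (p + q)), rfl, ?_⟩
  rw [pqCycle_mod p (p + q) hn0]
  exact pqCycle_diff p q hp hq hpq i

lemma sym2_diff_eq {x₁ y₁ x₂ y₂ : ℤ} (h : s(x₁, y₁) = s(x₂, y₂)) :
    (x₁ - y₁).natAbs = (x₂ - y₂).natAbs := by
  rw [Sym2.eq_iff] at h
  rcases h with ⟨rfl, rfl⟩ | ⟨rfl, rfl⟩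
  · rfl
  · omega

lemma pqCycle_disjoint (p₁ q₁ p₂ q₂ : ℕ)
    (hp₁ : p₁.Prime) (hq₁ : q₁.Prime) (h₁ : p₁ < q₁)
    (hp₂ : p₂.Prime) (hq₂ : q₂.Prime) (h₂ : p₂ < q₂)
    (hsum : p₁ + q₁ = p₂ + q₂) (hne : (p₁, q₁) ≠ (p₂, q₂)) :
    Disjoint (cycleEdges (p₁ + q₁) (pqCycle p₁ (p₁ + q₁)))
      (cycleEdges (p₂ + q₂) (pqCycle p₂ (p₂ + q₂))) := by
  rw [Set.disjoint_left]
  intro e he₁ he₂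
  obtain ⟨x₁, y₁, rfl, hd₁⟩ := pqCycle_edge_diff p₁ q₁ hp₁ hq₁ h₁ e he₁
  obtain ⟨x₂, y₂, he, hd₂⟩ := pqCycle_edge_diff p₂ q₂ hp₂ hq₂ h₂ _ he₂
  have := sym2_diff_eq he
  have hne' : ¬(p₁ = p₂ ∧ q₁ = q₂) := by
    intro ⟨h, h'⟩; exact hne (by simp [h, h'])
  omega

lemma exists_prime_pairs (t : ℕ) (ht : 1 ≤ t) :
    ∃ (N : ℕ) (pr : Fin t → ℕ × ℕ),
      Function.Injective pr ∧
      ∀ i, (pr i).1.Prime ∧ (pr i).2.Prime ∧ (pr i).1 < (pr i).2 ∧ (pr i).1 + (pr i).2 = N := by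
  classical
  set m : ℕ := 2 * (t + 3) with hm
  set n : ℕ := 4 ^ m with hndef
  set N' : ℕ := 2 * n + 1 with hN'
  set k : ℕ := 2 ^ (m + 2) * t + 1 with hk
  have htp : t + 1 ≤ 2 ^ t := Nat.lt_two_pow_self
  have hA : (m + 1) * (t + 1) * 4 < 2 ^ m := by
    have h4t : (t + 1) * (t + 1) ≤ 4 ^ t := by
      calc (t + 1) * (t + 1) ≤ 2 ^ t * 2 ^ t := Nat.mul_le_mul htp htp
        _ = 4 ^ t := by rw [← Nat.mul_pow]
    have : 2 ^ m = 64 * 4 ^ t := by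
      rw [hm, show 2 * (t + 3) = 2 * t + 6 by ring, pow_add, Nat.pow_mul]
      ring
    rw [this]
    calc (m + 1) * (t + 1) * 4 = (2 * t + 7) * ((t + 1) * 4) := by rw [hm]; ring
      _ < 16 * (t + 1) * ((t + 1) * 4) :=
          Nat.mul_lt_mul_of_pos_right (by omega) (by omega)
      _ = 64 * ((t + 1) * (t + 1)) := by ring
      _ ≤ 64 * 4 ^ t := Nat.mul_le_mul_left _ h4t
  -- key exponent inequality
  have hmk : (m + 1) * k < n := by
    have : (m + 1) * k ≤ (m + 1) * (t + 1) * 2 ^ (m + 2) := by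
      rw [hk]
      calc (m + 1) * (2 ^ (m + 2) * t + 1)
          ≤ (m + 1) * (2 ^ (m + 2) * t + 2 ^ (m + 2)) :=
            Nat.mul_le_mul_left _ (by have := Nat.one_le_two_pow (n := m + 2); omega)
        _ = (m + 1) * (t + 1) * 2 ^ (m + 2) := by ring
    calc (m + 1) * k ≤ (m + 1) * (t + 1) * 2 ^ (m + 2) := this
      _ = (m + 1) * (t + 1) * 4 * 2 ^ m := by rw [pow_add]; ring
      _ < 2 ^ m * 2 ^ m := Nat.mul_lt_mul_of_pos_right hA (Nat.pow_pos (by omega))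
      _ = n := by rw [hndef, ← Nat.mul_pow]
  have hNk : N' ^ k < 4 ^ n := by
    calc N' ^ k ≤ (4 ^ (m + 1)) ^ k := by
          apply Nat.pow_le_pow_left
          rw [hN', hndef, pow_succ]
          omega
      _ = 4 ^ ((m + 1) * k) := by rw [← pow_mul]
      _ < 4 ^ n := Nat.pow_lt_pow_right (by omega) hmk
  have hn1 : 1 ≤ n := Nat.one_le_two_pow.trans (Nat.pow_le_pow_left (by omega) m)
  have hc : k ≤ (Nat.primesBelow N').card := chebyshev_lower n k hn1 hNk
  set S : Finset ℕ := Nat.primesBelow N' with hS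
  set c : ℕ := S.card with hcd
  -- count of ordered pairs
  have hoff : c * (c - 1) ≤ S.offDiag.card := by
    rw [Finset.offDiag_card, ← hcd, Nat.mul_sub_one]
  have hkk : 4 * N' * t ≤ k * (k - 1) := by
    have h1 : k - 1 = 2 ^ (m + 2) * t := by omega
    have h2 : 4 * N' ≤ 2 ^ (m + 2) * 2 ^ (m + 2) := by
      have e4 : (4 : ℕ) ^ m = 2 ^ m * 2 ^ m := by rw [← Nat.mul_pow]
      rw [hN', hndef, e4, pow_add]
      nlinarith [Nat.one_le_two_pow (n := m)]
    calc 4 * N' * t ≤ 2 ^ (m + 2) * 2 ^ (m + 2) * t := Nat.mul_le_mul_right _ h2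
      _ ≤ (2 ^ (m + 2) * t) * (2 ^ (m + 2) * t) := by nlinarith
      _ ≤ k * (k - 1) := by rw [h1]; exact Nat.mul_le_mul_right _ (by omega)
  have hcard : (Finset.Icc 1 (2 * N')).card * (2 * t) ≤ S.offDiag.card := by
    rw [Nat.card_Icc]
    have hkc : k * (k - 1) ≤ c * (c - 1) := Nat.mul_le_mul hc (by omega)
    calc (2 * N' + 1 - 1) * (2 * t) = 4 * N' * t := by rw [Nat.add_sub_cancel]; ring
      _ ≤ k * (k - 1) := hkk
      _ ≤ c * (c - 1) := hkc
      _ ≤ S.offDiag.card := hoff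
  have hmapsto : ∀ pq ∈ S.offDiag, pq.1 + pq.2 ∈ Finset.Icc 1 (2 * N') := by
    intro pq hpq
    rw [Finset.mem_offDiag] at hpq
    have h1 := Nat.lt_of_mem_primesBelow hpq.1
    have h2 := Nat.lt_of_mem_primesBelow hpq.2.1
    have h3 := (Nat.prime_of_mem_primesBelow hpq.1).two_le
    rw [Finset.mem_Icc]
    omega
  obtain ⟨b, _, hb⟩ := Finset.exists_le_card_fiber_of_mul_le_card_of_maps_to hmapsto
    ⟨1, Finset.mem_Icc.mpr (by omega)⟩ hcard
  set F : Finset (ℕ × ℕ) := {x ∈ S.offDiag | x.1 + x.2 = b} with hF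
  set g : ℕ × ℕ → ℕ × ℕ := fun pq => (min pq.1 pq.2, max pq.1 pq.2) with hg
  have hfib : F.card ≤ 2 * (F.image g).card := by
    apply Finset.card_le_mul_card_image
    intro a _
    have hsub : {x ∈ F | g x = a} ⊆ {(a.1, a.2), (a.2, a.1)} := by
      intro x hx
      simp only [Finset.mem_filter] at hx
      have := hx.2
      rw [hg] at this
      rcases le_total x.1 x.2 with h | h <;>
        simp only [min_eq_left, max_eq_right, min_eq_right, max_eq_left, h] at this <;>
        simp [Finset.mem_insert, ← this, Prod.ext_iff] <;> omega
    calc {x ∈ F | g x = a}.card ≤ ({(a.1, a.2), (a.2, a.1)} : Finset (ℕ × ℕ)).card :=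
          Finset.card_le_card hsub
      _ ≤ 2 := Finset.card_insert_le _ _ |>.trans (by simp)
  have himig : t ≤ (F.image g).card := by omega
  obtain ⟨T, hTsub, hTcard⟩ := Finset.exists_subset_card_eq himig
  have hTprop : ∀ x ∈ T, x.1.Prime ∧ x.2.Prime ∧ x.1 < x.2 ∧ x.1 + x.2 = b := by
    intro x hxT
    obtain ⟨pq, hpqF, hgpq⟩ := Finset.mem_image.mp (hTsub hxT)
    rw [hF, Finset.mem_filter, Finset.mem_offDiag] at hpqF
    obtain ⟨⟨hm1, hm2, hne⟩, hsum⟩ := hpqF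
    have hp1 := Nat.prime_of_mem_primesBelow hm1
    have hp2 := Nat.prime_of_mem_primesBelow hm2
    have h1 : min pq.1 pq.2 = x.1 ∧ max pq.1 pq.2 = x.2 := by
      simpa [hg, Prod.ext_iff] using hgpq
    obtain ⟨e1, e2⟩ := h1
    have hx1 : x.1 = pq.1 ∨ x.1 = pq.2 := by omega
    have hx2 : x.2 = pq.1 ∨ x.2 = pq.2 := by omega
    refine ⟨?_, ?_, by omega, by omega⟩
    · rcases hx1 with h | h <;> rw [h] <;> assumption
    · rcases hx2 with h | h <;> rw [h] <;> assumption
  refine ⟨b, fun i => T.equivFin.symm (Fin.cast hTcard.symm i), ?_, ?_⟩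
  · intro i j hij
    have : Fin.cast hTcard.symm i = Fin.cast hTcard.symm j :=
      T.equivFin.symm.injective (Subtype.ext hij)
    exact Fin.cast_injective _ this
  · intro i
    exact hTprop _ (T.equivFin.symm (Fin.cast hTcard.symm i)).2

/-- For every `t ≥ 1` there is an `n` such that `G_n` contains `t` pairwise
edge-disjoint Hamilton cycles. -/
theorem many_edge_disjoint_ham_cycles (t : ℕ) (ht : 1 ≤ t) :
    ∃ n : ℕ, ∃ a : Fin t → (ℕ → ℤ),
      (∀ i, IsPrimeDiffHamCycle n (a i)) ∧
      (∀ i j, i ≠ j → Disjoint (cycleEdges n (a i)) (cycleEdges n (a j))) := by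
  obtain ⟨N, pr, hprinj, hpr⟩ := exists_prime_pairs t ht
  refine ⟨N, fun i => pqCycle (pr i).1 N, ?_, ?_⟩
  · intro i
    obtain ⟨hp, hq, hlt, hsum⟩ := hpr i
    have := pqCycle_isHam (pr i).1 (pr i).2 hp hq hlt
    rwa [hsum] at this
  · intro i j hij
    obtain ⟨hp₁, hq₁, hlt₁, hsum₁⟩ := hpr i
    obtain ⟨hp₂, hq₂, hlt₂, hsum₂⟩ := hpr j
    have hne : (pr i).1 ≠ (pr j).1 ∨ (pr i).2 ≠ (pr j).2 := by
      by_contra h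
      push_neg at h
      exact hij (hprinj (Prod.ext h.1 h.2))
    have := pqCycle_disjoint (pr i).1 (pr i).2 (pr j).1 (pr j).2
      hp₁ hq₁ hlt₁ hp₂ hq₂ hlt₂ (by omega)
      (by intro h; rw [Prod.ext_iff] at h; tauto)
    rwa [hsum₁, hsum₂] at this
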